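/- arXiv:2202.13104 — 12 statements merged into one kernel-verified Lean document; each statement's English description precedes it below -/
import Mathlib

section
/- For every natural number n and every real x with 0 < x ≤ 1, ∑_{k=0}^{n} C(n,k) · x^k · (1−x)^{n−k} · (n−k)/(k+1) = ((1−x)/x) · (1 − (1−x)^{n}). -/
/-- Binomial expectation of (n−X)/(X+1): for a binomial random variable X with
parameters n and x (0 < x ≤ 1),
∑_{k=0}^{n} C(n,k)·x^k·(1−x)^{n−k}·(n−k)/(k+1) = ((1−x)/x)·(1 − (1−x)^n). -/
theorem binom_expectation_sub_div_succ (n : ℕ) (x : ℝ) (hx : 0 < x) (hx1 : x ≤ 1) :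
    ∑ k ∈ Finset.range (n + 1),
      (n.choose k : ℝ) * x ^ k * (1 - x) ^ (n - k) * (((n : ℝ) - k) / ((k : ℝ) + 1))
      = ((1 - x) / x) * (1 - (1 - x) ^ n) := by
  have hx0 : x ≠ 0 := ne_of_gt hx
  set f : ℕ → ℝ := fun j => (n.choose j : ℝ) * x ^ j * (1 - x) ^ (n - j) with hf
  have key : ∀ k ∈ Finset.range (n + 1),
      (n.choose k : ℝ) * x ^ k * (1 - x) ^ (n - k) * (((n : ℝ) - k) / ((k : ℝ) + 1))
      = ((1 - x) / x) * f (k + 1) := by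
    intro k hk
    rw [Finset.mem_range, Nat.lt_succ_iff] at hk
    rcases eq_or_lt_of_le hk with h | h
    · subst h; simp [hf, Nat.choose_succ_self]
    · have h1 : (n.choose (k + 1) : ℝ) * ((k : ℝ) + 1) = (n.choose k : ℝ) * ((n : ℝ) - k) := by
        have h2 := Nat.choose_succ_right_eq n k
        rw [← Nat.cast_sub h.le]
        exact_mod_cast h2
      have hnk : n - k = (n - (k + 1)) + 1 := by omega
      have hk1 : (k : ℝ) + 1 ≠ 0 := by positivity
      have hc : (n.choose (k + 1) : ℝ) = (n.choose k : ℝ) * ((n : ℝ) - (k : ℝ)) / ((k : ℝ) + 1) := by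
        field_simp
        linarith
      simp only [hf]
      rw [hnk, pow_succ, hc]
      field_simp
      ring
  rw [Finset.sum_congr rfl key, ← Finset.mul_sum]
  congr 1
  have binom : ∑ j ∈ Finset.range (n + 1), f j = 1 := by
    have hb := add_pow x (1 - x) n
    simp only [add_sub_cancel, one_pow] at hb
    rw [hf]
    exact (Finset.sum_congr rfl fun k _ => by ring).trans hb.symm
  have h2 : ∑ k ∈ Finset.range (n + 2), f k = 1 := by
    rw [Finset.sum_range_succ, binom]
    simp [hf, Nat.choose_succ_self]
  have h3 := Finset.sum_range_succ' f (n + 1)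
  have hf0 : f 0 = (1 - x) ^ n := by simp [hf]
  rw [h2, hf0] at h3
  linarith
end

section
/- For every natural number n and every real x with 0 ≤ x < 1, ∑_{k=0}^{n} C(n,k) · x^k · (1−x)^{n−k} · k/(n+1−k) = (x/(1−x)) · (1 − x^{n}). -/
/-- Binomial expectation of X/(n+1−X): for a binomial random variable X with
parameters n and x (0 ≤ x < 1),
∑_{k=0}^{n} C(n,k)·x^k·(1−x)^{n−k}·k/(n+1−k) = (x/(1−x))·(1 − x^n). -/
theorem binom_expectation_div_sub (n : ℕ) (x : ℝ) (hx : 0 ≤ x) (hx1 : x < 1) :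
    ∑ k ∈ Finset.range (n + 1),
      (n.choose k : ℝ) * x ^ k * (1 - x) ^ (n - k) * ((k : ℝ) / ((n : ℝ) + 1 - k))
      = (x / (1 - x)) * (1 - x ^ n) := by
  have h1 : (0:ℝ) < 1 - x := by linarith
  have hbin : ∑ j ∈ Finset.range (n+1), (n.choose j : ℝ) * x ^ j * (1-x)^(n-j) = 1 := by
    have h := add_pow x (1-x) n
    simp only [add_sub_cancel, one_pow] at h
    calc ∑ j ∈ Finset.range (n+1), (n.choose j : ℝ) * x ^ j * (1-x)^(n-j)
        = ∑ j ∈ Finset.range (n+1), x ^ j * (1-x)^(n-j) * (n.choose j : ℝ) := by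
          apply Finset.sum_congr rfl; intros; ring
      _ = 1 := h.symm
  have hbin' : ∑ j ∈ Finset.range n, (n.choose j : ℝ) * x ^ j * (1-x)^(n-j) = 1 - x ^ n := by
    have := Finset.sum_range_succ (fun j => (n.choose j : ℝ) * x ^ j * (1-x)^(n-j)) n
    rw [this] at hbin
    simp at hbin
    linarith
  rw [Finset.sum_range_succ']
  simp only [Nat.cast_zero, Nat.cast_add, Nat.cast_one, zero_div, mul_zero, add_zero]
  have key : ∀ j ∈ Finset.range n,
      (n.choose (j+1) : ℝ) * x ^ (j+1) * (1 - x) ^ (n - (j+1)) *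
        (((j:ℝ)+1) / ((n : ℝ) + 1 - ((j:ℝ)+1)))
      = (x / (1 - x)) * ((n.choose j : ℝ) * x ^ j * (1-x)^(n-j)) := by
    intro j hj
    rw [Finset.mem_range] at hj
    have hcast : ((n - j : ℕ) : ℝ) = (n:ℝ) - j := by
      rw [Nat.cast_sub hj.le]
    have hnj : (0:ℝ) < (n:ℝ) - j := by
      have : (j:ℝ) < n := by exact_mod_cast hj
      linarith
    have hchoose : (n.choose (j+1) : ℝ) * ((j:ℝ)+1) = (n.choose j : ℝ) * ((n:ℝ) - j) := by
      have := Nat.choose_succ_right_eq n j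
      have h2 : ((n.choose (j+1) * (j+1) : ℕ) : ℝ) = ((n.choose j * (n - j) : ℕ) : ℝ) := by
        exact_mod_cast congrArg Nat.cast this
      push_cast [hcast] at h2
      linarith
    have hpow : (1-x)^(n-j) = (1-x) * (1-x)^(n-(j+1)) := by
      rw [← pow_succ']
      congr 1
      omega
    have hne : (1:ℝ) - x ≠ 0 := ne_of_gt h1
    have hne2 : (n:ℝ) + 1 - ((j:ℝ)+1) ≠ 0 := by
      intro h; apply ne_of_gt hnj; linarith
    rw [hpow]
    field_simp
    linear_combination (x * x^j) * hchoose
  rw [Finset.sum_congr rfl key, ← Finset.mul_sum, hbin']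
end

section
/- For every real x with 0 < x ≤ 1, the average payoff of cooperators in the IPGG satisfies f_C(x) = b + F·c·((N−1)·x + 1)/N − c − τ − α·β·τ·r_p · (1 − (1−x)^{N−1})/x. -/
/-- IPGG payoff of a focal cooperator when k of the other N−1 group members cooperate. -/
noncomputable def piC (N : ℕ) (b c τ β rp α F : ℝ) (k : ℕ) : ℝ :=
  b + F * c * ((k : ℝ) + 1) / N - c - τ -
    α * β * τ * rp * ((if 1 ≤ k then (1 : ℝ) else 0) + ((N : ℝ) - 1 - k) / ((k : ℝ) + 1))

open Finset

lemma sumA (n : ℕ) (x : ℝ) :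
    ∑ k ∈ range (n+1), (n.choose k : ℝ) * x ^ k * (1-x) ^ (n-k) = 1 := by
  calc ∑ k ∈ range (n+1), (n.choose k : ℝ) * x ^ k * (1-x) ^ (n-k)
      = ∑ k ∈ range (n+1), x ^ k * (1-x) ^ (n-k) * (n.choose k : ℝ) := by
        apply sum_congr rfl; intros; ring
    _ = (x + (1-x))^n := (add_pow x (1-x) n).symm
    _ = 1 := by rw [show x + (1-x) = (1:ℝ) by ring, one_pow]

lemma sumB (m : ℕ) (x : ℝ) :
    ∑ k ∈ range (m+2), ((m+1).choose k : ℝ) * x ^ k * (1-x) ^ (m+1-k) * k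
      = ((m:ℝ)+1) * x := by
  rw [Finset.sum_range_succ']
  have key : ∀ i ∈ range (m+1),
      ((m+1).choose (i+1) : ℝ) * x ^ (i+1) * (1-x) ^ (m+1-(i+1)) * ((i+1 : ℕ) : ℝ)
        = ((m:ℝ)+1) * x * ((m.choose i : ℝ) * x ^ i * (1-x) ^ (m-i)) := by
    intro i _
    have h : ((m+1) * m.choose i : ℕ) = ((m+1).choose (i+1) * (i+1) : ℕ) :=
      Nat.add_one_mul_choose_eq m i
    have h' : ((m:ℝ)+1) * (m.choose i : ℝ) = ((m+1).choose (i+1) : ℝ) * ((i:ℝ)+1) := by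
      exact_mod_cast h
    rw [Nat.succ_sub_succ]
    push_cast
    calc ((m+1).choose (i+1) : ℝ) * x ^ (i+1) * (1-x) ^ (m-i) * ((i:ℝ)+1)
        = (((m+1).choose (i+1) : ℝ) * ((i:ℝ)+1)) * (x ^ (i+1) * (1-x) ^ (m-i)) := by ring
      _ = (((m:ℝ)+1) * (m.choose i : ℝ)) * (x ^ (i+1) * (1-x) ^ (m-i)) := by rw [← h']
      _ = ((m:ℝ)+1) * x * ((m.choose i : ℝ) * x ^ i * (1-x) ^ (m-i)) := by
          rw [pow_succ]; ring
  rw [Finset.sum_congr rfl key, ← Finset.mul_sum, sumA m x, mul_one]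
  simp

lemma sumC (n : ℕ) (x : ℝ) :
    ∑ k ∈ range (n+1), ((n+1).choose (k+1) : ℝ) * x ^ (k+1) * (1-x) ^ (n-k)
      = 1 - (1-x) ^ (n+1) := by
  have h := sumA (n+1) x
  rw [Finset.sum_range_succ'] at h
  simp only [Nat.succ_sub_succ, Nat.choose_zero_right, Nat.cast_one, one_mul, pow_zero,
    mul_one, Nat.sub_zero] at h
  linarith

/-- Average payoff of cooperators in the IPGG at cooperator frequency x ∈ (0,1]:
f_C(x) = b + F·c·((N−1)·x + 1)/N − c − τ − α·β·τ·r_p·(1 − (1−x)^{N−1})/x. -/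
theorem ipgg_avg_payoff_cooperators (N : ℕ) (hN : 2 ≤ N) (b c τ β rp α F : ℝ)
    (hc : 0 < c) (hτ : 0 < τ) (hβ : 0 < β) (hrp : 0 < rp) (hα0 : 0 ≤ α) (hα1 : α ≤ 1)
    (x : ℝ) (hx : 0 < x) (hx1 : x ≤ 1) :
    ∑ k ∈ Finset.range N,
      ((N - 1).choose k : ℝ) * x ^ k * (1 - x) ^ (N - 1 - k) * piC N b c τ β rp α F k
      = b + F * c * (((N : ℝ) - 1) * x + 1) / N - c - τ -
        α * β * τ * rp * (1 - (1 - x) ^ (N - 1)) / x := by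
  obtain ⟨m, rfl⟩ : ∃ m, N = m + 2 := ⟨N - 2, by omega⟩
  have hxne : x ≠ 0 := ne_of_gt hx
  have hNne : ((m:ℝ) + 2) ≠ 0 := by positivity
  have key : ∀ k ∈ range (m+2),
      ((m+2-1).choose k : ℝ) * x ^ k * (1-x) ^ (m+2-1-k) * piC (m+2) b c τ β rp α F k
      = (b + F * c / ((m:ℝ)+2) - c - τ) * (((m+1).choose k : ℝ) * x ^ k * (1-x) ^ (m+1-k))
        + (F * c / ((m:ℝ)+2)) * (((m+1).choose k : ℝ) * x ^ k * (1-x) ^ (m+1-k) * k)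
        - (α * β * τ * rp * x⁻¹) * (((m+2).choose (k+1) : ℝ) * x ^ (k+1) * (1-x) ^ (m+1-k))
        + (α * β * τ * rp) * (if k = 0 then ((m+1).choose k : ℝ) * x ^ k * (1-x) ^ (m+1-k) else 0) := by
    intro k _
    have h : ((m+2) * (m+1).choose k : ℕ) = ((m+2).choose (k+1) * (k+1) : ℕ) :=
      Nat.add_one_mul_choose_eq (m+1) k
    have h' : ((m:ℝ)+2) * ((m+1).choose k : ℝ) = ((m+2).choose (k+1) : ℝ) * ((k:ℝ)+1) := by
      exact_mod_cast h
    have hk1 : ((k:ℝ) + 1) ≠ 0 := by positivity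
    have hC' : (((m+2).choose (k+1) : ℝ)) = ((m:ℝ)+2) * ((m+1).choose k : ℝ) / ((k:ℝ)+1) := by
      field_simp
      linarith [h']
    simp only [show m+2-1 = m+1 from rfl]
    unfold piC
    rw [hC']
    rcases k with _ | j
    · rw [if_neg (by omega : ¬ (1:ℕ) ≤ 0), if_pos rfl]
      push_cast
      field_simp [hNne]
      ring
    · rw [if_pos (by omega : 1 ≤ j + 1), if_neg (Nat.succ_ne_zero j)]
      push_cast
      field_simp [hNne]
      ring
  rw [Finset.sum_congr rfl key]
  simp only [Finset.sum_add_distrib, Finset.sum_sub_distrib, ← Finset.mul_sum]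
  have hS3 : ∑ k ∈ range (m+2),
      (if k = 0 then ((m+1).choose k : ℝ) * x ^ k * (1-x) ^ (m+1-k) else 0)
      = (1-x) ^ (m+1) := by
    rw [Finset.sum_ite_eq' (range (m+2)) 0
      (fun k => ((m+1).choose k : ℝ) * x ^ k * (1-x) ^ (m+1-k))]
    simp
  rw [sumA (m+1) x, sumB m x, sumC (m+1) x, hS3]
  have hpow : (1-x) ^ (m+2) = (1-x) ^ (m+1) * (1-x) := by rw [pow_succ]
  push_cast
  rw [hpow]
  field_simp
  ring
end

section
/- For every real x with 0 ≤ x < 1, the average payoff of defectors in the IPGG satisfies f_D(x) = b + F·c·(N−1)·x/N − τ − (1−α)·β·τ·r_p · (1 − x^{N−1})/(1−x). -/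
/-- IPGG payoff of a focal defector when k of the other N−1 group members cooperate. -/
noncomputable def piD (N : ℕ) (b c τ β rp α F : ℝ) (k : ℕ) : ℝ :=
  b + F * c * (k : ℝ) / N - τ -
    (1 - α) * β * τ * rp * ((k : ℝ) / ((N : ℝ) - k) + (if k ≤ N - 2 then (1 : ℝ) else 0))

open Finset

lemma sum_binom_one (x : ℝ) (n : ℕ) :
    ∑ k ∈ range (n+1), (n.choose k : ℝ) * x ^ k * (1 - x) ^ (n - k) = 1 := by
  calc ∑ k ∈ range (n+1), (n.choose k : ℝ) * x ^ k * (1 - x) ^ (n - k)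
      = ∑ k ∈ range (n+1), x ^ k * (1 - x) ^ (n - k) * (n.choose k : ℝ) := by
        apply sum_congr rfl; intros; ring
    _ = (x + (1 - x)) ^ n := (add_pow x (1 - x) n).symm
    _ = 1 := by norm_num

lemma sum_binom_k (x : ℝ) (n : ℕ) :
    ∑ k ∈ range (n+1), (n.choose k : ℝ) * x ^ k * (1 - x) ^ (n - k) * k = n * x := by
  cases n with
  | zero => simp
  | succ m =>
    rw [Finset.sum_range_succ']
    simp only [Nat.cast_zero, mul_zero, add_zero]
    have key : ∀ k ∈ range (m+1),
        (((m+1).choose (k+1) : ℝ)) * x ^ (k+1) * (1 - x) ^ (m+1-(k+1)) * ((k+1 : ℕ):ℝ)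
        = ((m:ℝ)+1) * x * ((m.choose k : ℝ) * x ^ k * (1 - x) ^ (m - k)) := by
      intro k hk
      rw [Nat.succ_sub_succ]
      push_cast
      have h := Nat.add_one_mul_choose_eq m k
      have h' : ((m:ℝ)+1) * (m.choose k : ℝ) = ((m+1).choose (k+1) : ℝ) * ((k:ℝ)+1) := by
        exact_mod_cast congrArg (Nat.cast (R := ℝ)) h
      linear_combination (-(x ^ (k+1) * (1 - x) ^ (m - k))) * h'
    calc ∑ k ∈ range (m+1),
          (((m+1).choose (k+1) : ℝ)) * x ^ (k+1) * (1 - x) ^ (m+1-(k+1)) * ((k+1 : ℕ):ℝ)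
        = ∑ k ∈ range (m+1), ((m:ℝ)+1) * x * ((m.choose k : ℝ) * x ^ k * (1 - x) ^ (m - k)) :=
          sum_congr rfl key
      _ = ((m:ℝ)+1) * x * ∑ k ∈ range (m+1), (m.choose k : ℝ) * x ^ k * (1 - x) ^ (m - k) := by
          rw [Finset.mul_sum]
      _ = ((m+1:ℕ):ℝ) * x := by rw [sum_binom_one]; push_cast; ring

lemma sum_binom_shift (x : ℝ) (hx : x ≠ 1) (n : ℕ) :
    ∑ k ∈ range (n+1), ((n+1).choose k : ℝ) * x ^ k * (1 - x) ^ (n - k)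
      = (1 - x ^ (n+1)) / (1 - x) := by
  have h1x : (1 : ℝ) - x ≠ 0 := sub_ne_zero.mpr (fun h => hx h.symm)
  rw [eq_div_iff h1x]
  have hmul : (∑ k ∈ range (n+1), ((n+1).choose k : ℝ) * x ^ k * (1 - x) ^ (n - k)) * (1 - x)
      = ∑ k ∈ range (n+1), ((n+1).choose k : ℝ) * x ^ k * (1 - x) ^ (n+1-k) := by
    rw [Finset.sum_mul]
    apply sum_congr rfl; intro k hk
    have hk' : k ≤ n := Nat.lt_succ_iff.mp (mem_range.mp hk)
    rw [show n+1-k = (n-k)+1 by omega, pow_succ]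
    ring
  rw [hmul]
  have h2 := sum_binom_one x (n+1)
  rw [Finset.sum_range_succ] at h2
  simp only [Nat.choose_self, Nat.cast_one, one_mul, Nat.sub_self, pow_zero, mul_one] at h2
  linarith

lemma sum_punish (x : ℝ) (hx : x ≠ 1) (n : ℕ) (hn : 1 ≤ n) :
    ∑ k ∈ range (n+1), (n.choose k : ℝ) * x ^ k * (1 - x) ^ (n - k) *
      ((k : ℝ) / (((n:ℝ)+1) - k) + (if k ≤ n - 1 then (1:ℝ) else 0))
      = (1 - x ^ n) / (1 - x) := by
  have h1x : (1 : ℝ) - x ≠ 0 := sub_ne_zero.mpr (fun h => hx h.symm)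
  rw [Finset.sum_range_succ]
  have hlast : (n.choose n : ℝ) * x ^ n * (1 - x) ^ (n - n) *
      ((n : ℝ) / (((n:ℝ)+1) - n) + (if n ≤ n - 1 then (1:ℝ) else 0)) = x ^ n * n := by
    have : ¬ (n ≤ n - 1) := by omega
    simp [this, Nat.sub_self]
  rw [hlast]
  have hmain : ∀ k ∈ range n,
      (n.choose k : ℝ) * x ^ k * (1 - x) ^ (n - k) *
        ((k : ℝ) / (((n:ℝ)+1) - k) + (if k ≤ n - 1 then (1:ℝ) else 0))
      = ((n+1).choose k : ℝ) * x ^ k * (1 - x) ^ (n - k) := by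
    intro k hk
    have hkn : k < n := mem_range.mp hk
    have hif : k ≤ n - 1 := by omega
    rw [if_pos hif]
    have hden : ((n:ℝ)+1) - k = ((n + 1 - k : ℕ) : ℝ) := by
      have : k ≤ n + 1 := by omega
      push_cast [this]
      ring
    have hden' : ((n + 1 - k : ℕ) : ℝ) ≠ 0 := by
      have : 0 < n + 1 - k := by omega
      positivity
    have hch := Nat.choose_mul_succ_eq n k
    have hch' : (n.choose k : ℝ) * ((n:ℝ)+1) = ((n+1).choose k : ℝ) * ((n + 1 - k : ℕ) : ℝ) := by
      exact_mod_cast congrArg (Nat.cast (R := ℝ)) hch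
    rw [hden]
    have hkval : (k : ℝ) = ((n + 1 - k : ℕ) : ℝ) * ((k:ℝ) / ((n + 1 - k : ℕ) : ℝ)) := by
      field_simp
    field_simp
    have : (k : ℝ) + ((n + 1 - k : ℕ) : ℝ) = (n:ℝ) + 1 := by
      have : k ≤ n + 1 := by omega
      push_cast [this]; ring
    linear_combination (x ^ k) * hch'
      + ((n.choose k : ℝ) * x ^ k) * this
  rw [Finset.sum_congr rfl hmain]
  have hshift := sum_binom_shift x hx n
  rw [Finset.sum_range_succ] at hshift
  have hcn : ((n+1).choose n : ℝ) = (n:ℝ) + 1 := by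
    rw [Nat.choose_succ_self_right]; push_cast; ring
  rw [hcn, Nat.sub_self, pow_zero, mul_one] at hshift
  have : ∑ k ∈ range n, ((n+1).choose k : ℝ) * x ^ k * (1 - x) ^ (n - k)
      = (1 - x ^ (n+1)) / (1 - x) - ((n:ℝ)+1) * x ^ n := by linarith
  rw [this]
  field_simp
  ring

/-- Average payoff of defectors in the IPGG at cooperator frequency x ∈ [0,1):
f_D(x) = b + F·c·(N−1)·x/N − τ − (1−α)·β·τ·r_p·(1 − x^{N−1})/(1−x). -/
theorem ipgg_avg_payoff_defectors (N : ℕ) (hN : 2 ≤ N) (b c τ β rp α F : ℝ)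
    (hc : 0 < c) (hτ : 0 < τ) (hβ : 0 < β) (hrp : 0 < rp) (hα0 : 0 ≤ α) (hα1 : α ≤ 1)
    (x : ℝ) (hx : 0 ≤ x) (hx1 : x < 1) :
    ∑ k ∈ Finset.range N,
      ((N - 1).choose k : ℝ) * x ^ k * (1 - x) ^ (N - 1 - k) * piD N b c τ β rp α F k
      = b + F * c * ((N : ℝ) - 1) * x / N - τ -
        (1 - α) * β * τ * rp * (1 - x ^ (N - 1)) / (1 - x) := by
  obtain ⟨n, rfl⟩ : ∃ n, N = n + 1 := ⟨N - 1, by omega⟩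
  have hn : 1 ≤ n := by omega
  have hx1' : x ≠ 1 := ne_of_lt hx1
  have h1x : (1 : ℝ) - x ≠ 0 := sub_ne_zero.mpr (fun h => hx1' h.symm)
  have hNr : ((n:ℝ) + 1) ≠ 0 := by positivity
  simp only [Nat.add_sub_cancel]
  have hexp : ∀ k ∈ range (n+1),
      (n.choose k : ℝ) * x ^ k * (1 - x) ^ (n - k) * piD (n+1) b c τ β rp α F k
      = (b - τ) * ((n.choose k : ℝ) * x ^ k * (1 - x) ^ (n - k))
        + (F * c / ((n:ℝ)+1)) * ((n.choose k : ℝ) * x ^ k * (1 - x) ^ (n - k) * k)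
        - ((1 - α) * β * τ * rp) *
          ((n.choose k : ℝ) * x ^ k * (1 - x) ^ (n - k) *
            ((k : ℝ) / (((n:ℝ)+1) - k) + (if k ≤ n - 1 then (1:ℝ) else 0))) := by
    intro k hk
    unfold piD
    have h2 : n + 1 - 2 = n - 1 := by omega
    rw [h2]
    push_cast
    ring
  rw [Finset.sum_congr rfl hexp, Finset.sum_sub_distrib, Finset.sum_add_distrib,
    ← Finset.mul_sum, ← Finset.mul_sum, ← Finset.mul_sum,
    sum_binom_one, sum_binom_k, sum_punish x hx1' n hn]
  push_cast
  ring
end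

section
/- For every real x with 0 < x < 1, the payoff difference in the IPGG satisfies f_C(x) − f_D(x) = F·c/N − c + (1−α)·β·τ·r_p · ∑_{k=0}^{N−2} x^k − α·β·τ·r_p · ∑_{k=0}^{N−2} (1−x)^k. -/
/-- Average payoff of cooperators in the IPGG at cooperator frequency x. -/
noncomputable def fC (N : ℕ) (b c τ β rp α F : ℝ) (x : ℝ) : ℝ :=
  ∑ k ∈ Finset.range N,
    ((N - 1).choose k : ℝ) * x ^ k * (1 - x) ^ (N - 1 - k) * piC N b c τ β rp α F k

/-- Average payoff of defectors in the IPGG at cooperator frequency x. -/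
noncomputable def fD (N : ℕ) (b c τ β rp α F : ℝ) (x : ℝ) : ℝ :=
  ∑ k ∈ Finset.range N,
    ((N - 1).choose k : ℝ) * x ^ k * (1 - x) ^ (N - 1 - k) * piD N b c τ β rp α F k

open Finset

lemma ipgg_key0 (M : ℕ) (x : ℝ) :
    ∑ k ∈ range (M+1), (M.choose k : ℝ) * x ^ k * (1-x) ^ (M-k) = 1 := by
  have hbin := add_pow x (1-x) M
  simp only [add_sub_cancel, one_pow] at hbin
  calc ∑ k ∈ range (M+1), (M.choose k : ℝ) * x ^ k * (1-x) ^ (M-k)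
      = ∑ k ∈ range (M+1), x ^ k * (1-x) ^ (M-k) * (M.choose k : ℝ) :=
        sum_congr rfl (fun k _ => by ring)
    _ = 1 := hbin.symm

lemma ipgg_key1 (M : ℕ) (x : ℝ) (hx1 : x ≠ 1) :
    ∑ k ∈ range (M+1), ((M+1).choose k : ℝ) * x ^ k * (1-x) ^ (M-k)
      = ∑ k ∈ range (M+1), x ^ k := by
  have h1 : (1:ℝ) - x ≠ 0 := sub_ne_zero.mpr (Ne.symm hx1)
  apply mul_right_cancel₀ h1
  rw [sum_mul, sum_mul]
  have hL : ∀ k ∈ range (M+1),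
      ((M+1).choose k : ℝ) * x ^ k * (1-x) ^ (M-k) * (1-x)
        = ((M+1).choose k : ℝ) * x ^ k * (1-x) ^ (M+1-k) := by
    intro k hk
    rw [mem_range] at hk
    have h : M + 1 - k = (M - k) + 1 := by omega
    rw [h, pow_succ]; ring
  rw [sum_congr rfl hL]
  have hbin := add_pow x (1-x) (M+1)
  simp only [add_sub_cancel, one_pow] at hbin
  have hfull : ∑ k ∈ range (M+2), ((M+1).choose k : ℝ) * x ^ k * (1-x) ^ (M+1-k) = 1 :=
    calc ∑ k ∈ range (M+2), ((M+1).choose k : ℝ) * x ^ k * (1-x) ^ (M+1-k)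
        = ∑ k ∈ range (M+1+1), x ^ k * (1-x) ^ (M+1-k) * ((M+1).choose k : ℝ) :=
          sum_congr rfl (fun k _ => by ring)
      _ = 1 := hbin.symm
  have hsplit := sum_range_succ
    (fun k => ((M+1).choose k : ℝ) * x ^ k * (1-x) ^ (M+1-k)) (M+1)
  simp only [Nat.choose_self, Nat.sub_self, pow_zero, Nat.cast_one] at hsplit
  have hS : ∑ k ∈ range (M+1), ((M+1).choose k : ℝ) * x ^ k * (1-x) ^ (M+1-k)
      = 1 - x ^ (M+1) := by
    rw [hsplit] at hfull; linarith
  rw [hS, ← sum_mul]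
  linear_combination geom_sum_mul x (M+1)

lemma ipgg_key2 (M : ℕ) (x : ℝ) (hx : x ≠ 0) :
    ∑ k ∈ range (M+1), ((M+1).choose (k+1) : ℝ) * x ^ k * (1-x) ^ (M-k)
      = ∑ k ∈ range (M+1), (1-x) ^ k := by
  apply mul_right_cancel₀ hx
  rw [sum_mul, sum_mul]
  have hL : ∀ k ∈ range (M+1),
      ((M+1).choose (k+1) : ℝ) * x ^ k * (1-x) ^ (M-k) * x
        = ((M+1).choose (k+1) : ℝ) * x ^ (k+1) * (1-x) ^ (M+1-(k+1)) := by
    intro k hk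
    have h : M + 1 - (k+1) = M - k := by omega
    rw [h, pow_succ]; ring
  rw [sum_congr rfl hL]
  have hbin := add_pow x (1-x) (M+1)
  simp only [add_sub_cancel, one_pow] at hbin
  have hfull : ∑ k ∈ range (M+2), ((M+1).choose k : ℝ) * x ^ k * (1-x) ^ (M+1-k) = 1 :=
    calc ∑ k ∈ range (M+2), ((M+1).choose k : ℝ) * x ^ k * (1-x) ^ (M+1-k)
        = ∑ k ∈ range (M+1+1), x ^ k * (1-x) ^ (M+1-k) * ((M+1).choose k : ℝ) :=
          sum_congr rfl (fun k _ => by ring)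
      _ = 1 := hbin.symm
  have hsplit := sum_range_succ'
    (fun k => ((M+1).choose k : ℝ) * x ^ k * (1-x) ^ (M+1-k)) (M+1)
  simp only [Nat.choose_zero_right, pow_zero, Nat.cast_one, Nat.sub_zero] at hsplit
  have hS : ∑ k ∈ range (M+1), ((M+1).choose (k+1) : ℝ) * x ^ (k+1) * (1-x) ^ (M+1-(k+1))
      = 1 - (1-x) ^ (M+1) := by
    rw [hsplit] at hfull
    simp only [mul_one, one_mul] at hfull ⊢
    linarith
  rw [hS, ← sum_mul]
  linear_combination geom_sum_mul (1-x) (M+1)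

lemma ipgg_L1 (M : ℕ) (x : ℝ) (hM : 1 ≤ M) (hx1 : x ≠ 1) :
    ∑ k ∈ range (M+1), (M.choose k : ℝ) * x ^ k * (1-x) ^ (M-k) *
        ((k : ℝ) / (((M:ℝ)+1) - k) + (if k ≤ M - 1 then (1:ℝ) else 0))
      = ∑ k ∈ range M, x ^ k := by
  have hterm : ∀ k ∈ range (M+1),
      (M.choose k : ℝ) * x ^ k * (1-x) ^ (M-k) *
        ((k : ℝ) / (((M:ℝ)+1) - k) + (if k ≤ M - 1 then (1:ℝ) else 0))
      = ((M+1).choose k : ℝ) * x ^ k * (1-x) ^ (M-k)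
        - (if k = M then x ^ M else 0) := by
    intro k hk
    rw [mem_range] at hk
    have hden : ((M:ℝ)+1) - k ≠ 0 := by
      have : (k:ℝ) < (M:ℝ)+1 := by exact_mod_cast hk
      linarith
    have hcast : (M.choose k : ℝ) * ((M:ℝ)+1) = ((M+1).choose k : ℝ) * (((M:ℝ)+1) - k) := by
      have h2 := congrArg (Nat.cast : ℕ → ℝ) (Nat.choose_mul_succ_eq M k)
      push_cast [Nat.cast_sub (by omega : k ≤ M+1)] at h2
      linarith [h2]
    by_cases hkM : k = M
    · subst hkM
      simp only [Nat.choose_self, Nat.cast_one, Nat.sub_self, pow_zero,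
        if_neg (show ¬ (k ≤ k - 1) by omega), if_pos rfl, ↓reduceIte]
      have hc2 : ((k+1).choose k : ℝ) = (k:ℝ) + 1 := by
        rw [Nat.choose_succ_self_right]; push_cast; ring
      rw [hc2]
      field_simp
      ring
    · rw [if_pos (by omega : k ≤ M - 1), if_neg hkM]
      field_simp
      linear_combination (x^k * (1-x)^(M-k)) * hcast
  rw [sum_congr rfl hterm, sum_sub_distrib, ipgg_key1 M x hx1,
    sum_ite_eq' (range (M+1)) M (fun _ => x ^ M),
    if_pos (mem_range.mpr (by omega)), sum_range_succ]
  ring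

lemma ipgg_L2 (M : ℕ) (x : ℝ) (hM : 1 ≤ M) (hx : x ≠ 0) :
    ∑ k ∈ range (M+1), (M.choose k : ℝ) * x ^ k * (1-x) ^ (M-k) *
        ((if 1 ≤ k then (1:ℝ) else 0) + ((M:ℝ) - k) / ((k:ℝ) + 1))
      = ∑ k ∈ range M, (1-x) ^ k := by
  have hterm : ∀ k ∈ range (M+1),
      (M.choose k : ℝ) * x ^ k * (1-x) ^ (M-k) *
        ((if 1 ≤ k then (1:ℝ) else 0) + ((M:ℝ) - k) / ((k:ℝ) + 1))
      = ((M+1).choose (k+1) : ℝ) * x ^ k * (1-x) ^ (M-k)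
        - (if k = 0 then (1-x) ^ M else 0) := by
    intro k hk
    rw [mem_range] at hk
    have hden : (k:ℝ) + 1 ≠ 0 := by positivity
    have hcast : ((M:ℝ)+1) * (M.choose k : ℝ) = ((M+1).choose (k+1) : ℝ) * ((k:ℝ) + 1) := by
      have h2 := congrArg (Nat.cast : ℕ → ℝ) (Nat.add_one_mul_choose_eq M k)
      push_cast at h2
      linarith [h2]
    by_cases hk0 : k = 0
    · subst hk0
      simp only [Nat.choose_zero_right, Nat.cast_one, Nat.cast_zero, pow_zero, Nat.sub_zero,
        if_neg (by norm_num : ¬ (1 ≤ 0)), if_pos rfl, ↓reduceIte]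
      have hc2 : ((M+1).choose 1 : ℝ) = (M:ℝ) + 1 := by
        rw [Nat.choose_one_right]; push_cast; ring
      rw [hc2]
      field_simp
      ring
    · rw [if_pos (by omega : 1 ≤ k), if_neg hk0]
      field_simp
      linear_combination (x^k * (1-x)^(M-k)) * hcast
  rw [sum_congr rfl hterm, sum_sub_distrib, ipgg_key2 M x hx,
    sum_ite_eq' (range (M+1)) 0 (fun _ => (1-x) ^ M),
    if_pos (mem_range.mpr (by omega)), sum_range_succ]
  ring

/-- Payoff difference in the IPGG for x ∈ (0,1):
f_C(x) − f_D(x) = F·c/N − c + (1−α)·β·τ·r_p·∑_{k=0}^{N−2} x^k − α·β·τ·r_p·∑_{k=0}^{N−2} (1−x)^k. -/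
theorem ipgg_payoff_difference (N : ℕ) (hN : 2 ≤ N) (b c τ β rp α F : ℝ)
    (hc : 0 < c) (hτ : 0 < τ) (hβ : 0 < β) (hrp : 0 < rp) (hα0 : 0 ≤ α) (hα1 : α ≤ 1)
    (x : ℝ) (hx : 0 < x) (hx1 : x < 1) :
    fC N b c τ β rp α F x - fD N b c τ β rp α F x
      = F * c / N - c
        + (1 - α) * β * τ * rp * (∑ k ∈ Finset.range (N - 1), x ^ k)
        - α * β * τ * rp * (∑ k ∈ Finset.range (N - 1), (1 - x) ^ k) := by
  obtain ⟨M, rfl⟩ : ∃ M, N = M + 1 := ⟨N - 1, by omega⟩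
  have hM : 1 ≤ M := by omega
  have hx0' : x ≠ 0 := ne_of_gt hx
  have hx1' : x ≠ 1 := ne_of_lt hx1
  unfold fC fD
  rw [← sum_sub_distrib]
  have hstep : ∀ k ∈ range (M+1),
      ((M+1-1).choose k : ℝ) * x ^ k * (1-x) ^ (M+1-1-k) * piC (M+1) b c τ β rp α F k
        - ((M+1-1).choose k : ℝ) * x ^ k * (1-x) ^ (M+1-1-k) * piD (M+1) b c τ β rp α F k
      = ((M.choose k : ℝ) * x ^ k * (1-x) ^ (M-k)) * (F * c / ((M:ℝ)+1) - c)
        + (1 - α) * β * τ * rp *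
            ((M.choose k : ℝ) * x ^ k * (1-x) ^ (M-k) *
              ((k : ℝ) / (((M:ℝ)+1) - k) + (if k ≤ M - 1 then (1:ℝ) else 0)))
        - α * β * τ * rp *
            ((M.choose k : ℝ) * x ^ k * (1-x) ^ (M-k) *
              ((if 1 ≤ k then (1:ℝ) else 0) + ((M:ℝ) - k) / ((k:ℝ) + 1))) := by
    intro k hk
    unfold piC piD
    have e1 : M + 1 - 1 = M := by omega
    have e2 : M + 1 - 2 = M - 1 := by omega
    rw [e1, e2]
    have hden : ((M:ℝ)+1) ≠ 0 := by positivity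
    push_cast
    ring
  rw [sum_congr rfl hstep, sum_sub_distrib, sum_add_distrib, ← mul_sum, ← mul_sum, ← sum_mul,
    ipgg_key0 M x, ipgg_L1 M x hM hx1', ipgg_L2 M x hM hx0']
  simp only [Nat.add_sub_cancel]
  push_cast
  ring
end

section
/- The IPGG gradient function Q is strictly increasing on the interval [0,1]; equivalently, for all x, y ∈ [0,1] with x < y one has Q(x) < Q(y). -/
/-- The IPGG gradient function Q. -/
noncomputable def Qipgg (N : ℕ) (c τ β rp α F : ℝ) (x : ℝ) : ℝ :=
  F * c / N - c - 2 * α * β * τ * rp + β * τ * rp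
    - α * β * τ * rp * (∑ k ∈ Finset.range (N - 1), (1 - x) ^ (k + 1))
    + (1 - α) * β * τ * rp * (∑ k ∈ Finset.range (N - 1), x ^ (k + 1))

lemma ipgg_sum_lt (N : ℕ) (hN : 2 ≤ N) {a b : ℝ} (ha : 0 ≤ a) (hab : a < b) :
    ∑ k ∈ Finset.range (N - 1), a ^ (k + 1) < ∑ k ∈ Finset.range (N - 1), b ^ (k + 1) := by
  apply Finset.sum_lt_sum_of_nonempty
  · simp [Finset.nonempty_range_iff]; omega
  · intro k _
    exact pow_lt_pow_left₀ hab ha (Nat.succ_ne_zero k)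

lemma ipgg_sum_le (N : ℕ) {a b : ℝ} (ha : 0 ≤ a) (hab : a ≤ b) :
    ∑ k ∈ Finset.range (N - 1), a ^ (k + 1) ≤ ∑ k ∈ Finset.range (N - 1), b ^ (k + 1) := by
  apply Finset.sum_le_sum
  intro k _
  exact pow_le_pow_left₀ ha hab _

/-- The IPGG gradient function Q is strictly increasing on [0,1]:
for all x, y ∈ [0,1] with x < y one has Q(x) < Q(y). -/
theorem ipgg_Q_strictMonoOn (N : ℕ) (hN : 2 ≤ N) (c τ β rp α F : ℝ)
    (hc : 0 < c) (hτ : 0 < τ) (hβ : 0 < β) (hrp : 0 < rp) (hα0 : 0 ≤ α) (hα1 : α ≤ 1) :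
    ∀ x ∈ Set.Icc (0 : ℝ) 1, ∀ y ∈ Set.Icc (0 : ℝ) 1, x < y →
      Qipgg N c τ β rp α F x < Qipgg N c τ β rp α F y := by
  rintro x ⟨hx0, hx1⟩ y ⟨hy0, hy1⟩ hxy
  have hK : 0 < β * τ * rp := by positivity
  simp only [Qipgg]
  set Sx := ∑ k ∈ Finset.range (N - 1), x ^ (k + 1) with hSx
  set Sy := ∑ k ∈ Finset.range (N - 1), y ^ (k + 1) with hSy
  set Tx := ∑ k ∈ Finset.range (N - 1), (1 - x) ^ (k + 1) with hTx
  set Ty := ∑ k ∈ Finset.range (N - 1), (1 - y) ^ (k + 1) with hTy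
  rcases lt_or_eq_of_le hα1 with hα | hα
  · have h2 : Sx < Sy := ipgg_sum_lt N hN hx0 hxy
    have h1 : Ty ≤ Tx := ipgg_sum_le N (by linarith) (by linarith)
    nlinarith [mul_pos (mul_pos (sub_pos.mpr hα) hK) (sub_pos.mpr h2),
      mul_nonneg (mul_nonneg hα0 hK.le) (sub_nonneg.mpr h1)]
  · subst hα
    have h1 : Ty < Tx := ipgg_sum_lt N hN (by linarith) (by linarith)
    nlinarith [mul_pos hK (sub_pos.mpr h1)]
end

section
/- If F < F_min, then Q(x) < 0 for all x ∈ (0,1]; in particular the replicator dynamics ẋ = x(1−x)Q(x) has no interior equilibrium in (0,1), the gradient of selection x(1−x)Q(x) is negative on (0,1), and the population evolves toward full defection (x = 0 is the attracting boundary state). -/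
/-- The lower threshold F_min for the pool multiplier in the IPGG. -/
noncomputable def Fmin (N : ℕ) (c τ β rp α : ℝ) : ℝ :=
  N * (c - β * τ * rp + 2 * α * β * τ * rp - (1 - α) * β * τ * rp * ((N : ℝ) - 1)) / c

/-- The upper threshold F_max for the pool multiplier in the IPGG. -/
noncomputable def Fmax (N : ℕ) (c τ β rp α : ℝ) : ℝ :=
  N * (c - β * τ * rp + α * β * τ * rp * ((N : ℝ) + 1)) / c

/-- If F < F_min then Q(x) < 0 on (0,1], the gradient of selection x(1−x)Q(x) is
negative on (0,1), and the replicator dynamics has no interior equilibrium: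
the population evolves toward full defection. -/
theorem ipgg_defection_dominance (N : ℕ) (hN : 2 ≤ N) (c τ β rp α F : ℝ)
    (hc : 0 < c) (hτ : 0 < τ) (hβ : 0 < β) (hrp : 0 < rp) (hα0 : 0 ≤ α) (hα1 : α ≤ 1)
    (hF : F < Fmin N c τ β rp α) :
    (∀ x : ℝ, 0 < x → x ≤ 1 → Qipgg N c τ β rp α F x < 0) ∧
    (∀ x : ℝ, 0 < x → x < 1 → x * (1 - x) * Qipgg N c τ β rp α F x < 0) ∧
    ¬∃ x : ℝ, 0 < x ∧ x < 1 ∧ x * (1 - x) * Qipgg N c τ β rp α F x = 0 := by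
  have hNpos : (0:ℝ) < (N:ℝ) := by
    exact_mod_cast Nat.lt_of_lt_of_le Nat.zero_lt_two hN
  have hX : (0:ℝ) < β * τ * rp := by positivity
  -- key bound on F*c/N
  have hFc : F * c / N < c - β * τ * rp + 2 * α * β * τ * rp
      - (1 - α) * β * τ * rp * ((N : ℝ) - 1) := by
    rw [div_lt_iff₀ hNpos]
    have h1 : F * c < N * (c - β * τ * rp + 2 * α * β * τ * rp
        - (1 - α) * β * τ * rp * ((N : ℝ) - 1)) := by
      have := (mul_lt_mul_iff_of_pos_right hc).mpr hF
      unfold Fmin at this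
      rwa [div_mul_cancel₀ _ (ne_of_gt hc)] at this
    linarith
  have hcast : ((N - 1 : ℕ) : ℝ) = (N : ℝ) - 1 := by
    have : 1 ≤ N := le_trans one_le_two hN
    push_cast [Nat.cast_sub this]
    ring
  have hQ : ∀ x : ℝ, 0 < x → x ≤ 1 → Qipgg N c τ β rp α F x < 0 := by
    intro x hx0 hx1
    have hS1 : 0 ≤ ∑ k ∈ Finset.range (N - 1), (1 - x) ^ (k + 1) := by
      apply Finset.sum_nonneg
      intro k _
      exact pow_nonneg (by linarith) _
    have hS2 : ∑ k ∈ Finset.range (N - 1), x ^ (k + 1) ≤ (N : ℝ) - 1 := by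
      calc ∑ k ∈ Finset.range (N - 1), x ^ (k + 1)
          ≤ ∑ k ∈ Finset.range (N - 1), (1:ℝ) := by
            apply Finset.sum_le_sum
            intro k _
            exact pow_le_one₀ (le_of_lt hx0) hx1
        _ = ((N - 1 : ℕ) : ℝ) := by simp
        _ = (N : ℝ) - 1 := hcast
    unfold Qipgg
    have h1 : 0 ≤ α * β * τ * rp * (∑ k ∈ Finset.range (N - 1), (1 - x) ^ (k + 1)) := by
      have : 0 ≤ α * β * τ * rp := by positivity
      exact mul_nonneg this hS1
    have h2 : (1 - α) * β * τ * rp * (∑ k ∈ Finset.range (N - 1), x ^ (k + 1))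
        ≤ (1 - α) * β * τ * rp * ((N : ℝ) - 1) := by
      apply mul_le_mul_of_nonneg_left hS2
      have : 0 ≤ 1 - α := by linarith
      positivity
    linarith
  refine ⟨hQ, ?_, ?_⟩
  · intro x hx0 hx1
    have := hQ x hx0 (le_of_lt hx1)
    have hpos : 0 < x * (1 - x) := mul_pos hx0 (by linarith)
    exact mul_neg_of_pos_of_neg hpos this
  · rintro ⟨x, hx0, hx1, hxe⟩
    have := hQ x hx0 (le_of_lt hx1)
    have hpos : 0 < x * (1 - x) := mul_pos hx0 (by linarith)
    have := mul_neg_of_pos_of_neg hpos this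
    linarith
end

section
/- If F_min < F < F_max, then there exists a unique x* ∈ (0,1) with Q(x*) = 0; moreover Q(x) < 0 for all x ∈ (0, x*) and Q(x) > 0 for all x ∈ (x*, 1), so that for the replicator dynamics ẋ = x(1−x)Q(x) the interior equilibrium x* is unstable and both boundary states x = 0 and x = 1 are attracting (bistability). -/
lemma sum_pow_mono (n : ℕ) (hn : 1 ≤ n) {x y : ℝ} (hx : 0 ≤ x) (hxy : x ≤ y) :
    y - x ≤ (∑ k ∈ Finset.range n, y ^ (k + 1)) - (∑ k ∈ Finset.range n, x ^ (k + 1)) := by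
  rw [← Finset.sum_sub_distrib]
  have h0 : (0 : ℕ) ∈ Finset.range n := Finset.mem_range.2 hn
  have := Finset.single_le_sum (f := fun k => y ^ (k + 1) - x ^ (k + 1))
    (fun k _ => sub_nonneg.mpr (pow_le_pow_left₀ hx hxy (k + 1))) h0
  simpa using this

/-- If F_min < F < F_max then Q has a unique zero x* in (0,1), with Q < 0 on (0,x*)
and Q > 0 on (x*,1): the interior equilibrium x* of the replicator dynamics
ẋ = x(1−x)Q(x) is unstable and both boundary states x = 0, x = 1 are attracting. -/
theorem ipgg_bistability (N : ℕ) (hN : 2 ≤ N) (c τ β rp α F : ℝ)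
    (hc : 0 < c) (hτ : 0 < τ) (hβ : 0 < β) (hrp : 0 < rp) (hα0 : 0 ≤ α) (hα1 : α ≤ 1)
    (hFlo : Fmin N c τ β rp α < F) (hFhi : F < Fmax N c τ β rp α) :
    ∃ xs : ℝ, 0 < xs ∧ xs < 1 ∧ Qipgg N c τ β rp α F xs = 0 ∧
      (∀ y : ℝ, 0 < y → y < 1 → Qipgg N c τ β rp α F y = 0 → y = xs) ∧
      (∀ x : ℝ, 0 < x → x < xs → Qipgg N c τ β rp α F x < 0) ∧
      (∀ x : ℝ, xs < x → x < 1 → 0 < Qipgg N c τ β rp α F x) := by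
  have hn1 : 1 ≤ N - 1 := by omega
  have hNpos : (0 : ℝ) < N := by positivity
  have hbt : 0 < β * τ * rp := by positivity
  -- strict monotonicity on [0,1]
  have hmono : ∀ x y : ℝ, 0 ≤ x → x < y → y ≤ 1 →
      Qipgg N c τ β rp α F x < Qipgg N c τ β rp α F y := by
    intro x y hx hxy hy
    have hd1 : y - x ≤ (∑ k ∈ Finset.range (N-1), (1 - x) ^ (k + 1))
        - (∑ k ∈ Finset.range (N-1), (1 - y) ^ (k + 1)) := by
      have := sum_pow_mono (N-1) hn1 (by linarith : (0:ℝ) ≤ 1 - y) (by linarith : 1 - y ≤ 1 - x)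
      linarith
    have hd2 : y - x ≤ (∑ k ∈ Finset.range (N-1), y ^ (k + 1))
        - (∑ k ∈ Finset.range (N-1), x ^ (k + 1)) :=
      sum_pow_mono (N-1) hn1 hx hxy.le
    have ha : 0 ≤ α * β * τ * rp := by positivity
    have hb : 0 ≤ (1 - α) * β * τ * rp := by
      have : 0 ≤ 1 - α := by linarith
      positivity
    unfold Qipgg
    nlinarith [mul_le_mul_of_nonneg_left hd1 ha, mul_le_mul_of_nonneg_left hd2 hb]
  -- boundary values
  have hcastN : ((N - 1 : ℕ) : ℝ) = (N : ℝ) - 1 := by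
    have : (1 : ℕ) ≤ N := by omega
    push_cast [Nat.cast_sub this]
    ring
  have hQ0 : Qipgg N c τ β rp α F 0 = F * c / N - (c - β * τ * rp + α * β * τ * rp * ((N : ℝ) + 1)) := by
    unfold Qipgg
    have hz : (∑ k ∈ Finset.range (N-1), (0:ℝ) ^ (k+1)) = 0 :=
      Finset.sum_eq_zero (fun k _ => zero_pow (Nat.succ_ne_zero k))
    have ho : (∑ k ∈ Finset.range (N-1), ((1:ℝ) - 0) ^ (k+1)) = (N:ℝ) - 1 := by
      simp [hcastN]
    rw [hz, ho]
    ring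
  have hQ1 : Qipgg N c τ β rp α F 1 = F * c / N - (c - β * τ * rp + 2 * α * β * τ * rp - (1 - α) * β * τ * rp * ((N : ℝ) - 1)) := by
    unfold Qipgg
    rw [Finset.sum_congr rfl (fun k _ => by norm_num : ∀ k ∈ Finset.range (N-1), ((1:ℝ) - 1) ^ (k+1) = 0)]
    rw [Finset.sum_congr rfl (fun k _ => by norm_num : ∀ k ∈ Finset.range (N-1), (1:ℝ) ^ (k+1) = 1)]
    rw [Finset.sum_const, Finset.sum_const, Finset.card_range, nsmul_eq_mul, nsmul_eq_mul, hcastN]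
    ring
  have hFcN : ∀ E : ℝ, F < (N : ℝ) * E / c → F * c / N < E := by
    intro E hFE
    rw [div_lt_iff₀ hNpos]
    calc F * c < ((N : ℝ) * E / c) * c := by nlinarith
    _ = E * N := by field_simp
  have hFcN' : ∀ E : ℝ, (N : ℝ) * E / c < F → E < F * c / N := by
    intro E hFE
    rw [lt_div_iff₀ hNpos]
    have : (N : ℝ) * E = ((N : ℝ) * E / c) * c := by field_simp
    nlinarith
  have hQ0neg : Qipgg N c τ β rp α F 0 < 0 := by
    rw [hQ0]
    have := hFcN _ hFhi
    unfold Fmax at hFhi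
    linarith [hFcN _ hFhi]
  have hQ1pos : 0 < Qipgg N c τ β rp α F 1 := by
    rw [hQ1]
    unfold Fmin at hFlo
    linarith [hFcN' _ hFlo]
  -- continuity
  have hcont : Continuous (Qipgg N c τ β rp α F) := by
    unfold Qipgg
    fun_prop
  -- IVT
  have hsub := intermediate_value_Ioo (le_of_lt (zero_lt_one)) hcont.continuousOn
    (a := (0:ℝ)) (b := 1)
  have h0mem : (0 : ℝ) ∈ Set.Ioo (Qipgg N c τ β rp α F 0) (Qipgg N c τ β rp α F 1) :=
    ⟨hQ0neg, hQ1pos⟩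
  obtain ⟨xs, hxs, hQxs⟩ := hsub h0mem
  refine ⟨xs, hxs.1, hxs.2, hQxs, ?_, ?_, ?_⟩
  · intro y hy0 hy1 hQy
    by_contra hne
    rcases lt_or_gt_of_ne hne with h | h
    · have := hmono y xs hy0.le h hxs.2.le
      rw [hQy, hQxs] at this; exact lt_irrefl _ this
    · have := hmono xs y hxs.1.le h hy1.le
      rw [hQy, hQxs] at this; exact lt_irrefl _ this
  · intro x hx0 hxxs
    have := hmono x xs hx0.le hxxs hxs.2.le
    rw [hQxs] at this; exact this
  · intro x hxsx hx1
    have := hmono xs x hxs.1.le hxsx hx1.le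
    rw [hQxs] at this; exact this
end

section
/- If F > F_max, then Q(x) > 0 for all x ∈ [0,1); in particular the replicator dynamics ẋ = x(1−x)Q(x) has no interior equilibrium in (0,1), the gradient of selection x(1−x)Q(x) is positive on (0,1), and the population evolves toward full cooperation (x = 1 is the attracting boundary state). -/
/-- If F > F_max then Q(x) > 0 on [0,1), the gradient of selection x(1−x)Q(x) is
positive on (0,1), and the replicator dynamics has no interior equilibrium:
the population evolves toward full cooperation. -/
theorem ipgg_cooperation_dominance (N : ℕ) (hN : 2 ≤ N) (c τ β rp α F : ℝ)
    (hc : 0 < c) (hτ : 0 < τ) (hβ : 0 < β) (hrp : 0 < rp) (hα0 : 0 ≤ α) (hα1 : α ≤ 1)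
    (hF : Fmax N c τ β rp α < F) :
    (∀ x : ℝ, 0 ≤ x → x < 1 → 0 < Qipgg N c τ β rp α F x) ∧
    (∀ x : ℝ, 0 < x → x < 1 → 0 < x * (1 - x) * Qipgg N c τ β rp α F x) ∧
    ¬∃ x : ℝ, 0 < x ∧ x < 1 ∧ x * (1 - x) * Qipgg N c τ β rp α F x = 0 := by
  have hN0 : (0:ℝ) < (N:ℝ) := by positivity
  have hA : 0 < β * τ * rp := by positivity
  -- key inequality from hF
  have hkey : c - β * τ * rp + α * (β * τ * rp) * ((N:ℝ) + 1) < F * c / N := by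
    rw [Fmax, div_lt_iff₀ hc] at hF
    rw [lt_div_iff₀ hN0]
    nlinarith
  have hQ : ∀ x : ℝ, 0 ≤ x → x < 1 → 0 < Qipgg N c τ β rp α F x := by
    intro x hx0 hx1
    have hS1 : (∑ k ∈ Finset.range (N - 1), (1 - x) ^ (k + 1)) ≤ (N:ℝ) - 1 := by
      have : (∑ k ∈ Finset.range (N - 1), (1 - x) ^ (k + 1)) ≤
          ∑ _k ∈ Finset.range (N - 1), (1:ℝ) := by
        apply Finset.sum_le_sum
        intro k _
        exact pow_le_one₀ (by linarith) (by linarith)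
      simp only [Finset.sum_const, Finset.card_range, nsmul_eq_mul, mul_one] at this
      have hcast : ((N - 1 : ℕ) : ℝ) = (N:ℝ) - 1 := by
        have h1 : 1 ≤ N := by omega
        push_cast [Nat.cast_sub h1]
        ring
      linarith [this, hcast.le]
    have hS2 : 0 ≤ (∑ k ∈ Finset.range (N - 1), x ^ (k + 1)) := by
      apply Finset.sum_nonneg
      intro k _
      positivity
    have hαA : 0 ≤ α * (β * τ * rp) := by positivity
    have h1α : 0 ≤ (1 - α) * (β * τ * rp) := by
      apply mul_nonneg (by linarith) hA.le
    unfold Qipgg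
    nlinarith [mul_le_mul_of_nonneg_left hS1 hαA,
      mul_nonneg h1α hS2]
  refine ⟨hQ, ?_, ?_⟩
  · intro x hx0 hx1
    have := hQ x hx0.le hx1
    have h1 : 0 < x * (1 - x) := by nlinarith
    positivity
  · rintro ⟨x, hx0, hx1, hx⟩
    have := hQ x hx0.le hx1
    have h1 : 0 < x * (1 - x) := by nlinarith
    nlinarith
end

section
/- The interior equilibrium of the IPGG decreases as the pool multiplier increases: if F₁ < F₂ with F_min < F₁ and F₂ < F_max, and x₁*, x₂* ∈ (0,1) are zeros of Q_{F₁} and Q_{F₂} respectively, then x₂* < x₁*. (Hence increasing F enlarges the basin of attraction of full cooperation.) -/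
/-- The interior equilibrium of the IPGG decreases as the pool multiplier increases:
if F₁ < F₂ with F_min < F₁ and F₂ < F_max, and x₁*, x₂* ∈ (0,1) are zeros of
Q_{F₁} and Q_{F₂} respectively, then x₂* < x₁*. -/
theorem ipgg_equilibrium_decreasing_in_F (N : ℕ) (hN : 2 ≤ N) (c τ β rp α : ℝ)
    (hc : 0 < c) (hτ : 0 < τ) (hβ : 0 < β) (hrp : 0 < rp) (hα0 : 0 ≤ α) (hα1 : α ≤ 1)
    (F₁ F₂ : ℝ) (hF12 : F₁ < F₂)
    (hFlo : Fmin N c τ β rp α < F₁) (hFhi : F₂ < Fmax N c τ β rp α)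
    (x₁ x₂ : ℝ) (hx₁ : 0 < x₁) (hx₁' : x₁ < 1) (hx₂ : 0 < x₂) (hx₂' : x₂ < 1)
    (hQ₁ : Qipgg N c τ β rp α F₁ x₁ = 0) (hQ₂ : Qipgg N c τ β rp α F₂ x₂ = 0) :
    x₂ < x₁ := by
  by_contra h
  push_neg at h
  have hle : x₁ ≤ x₂ := h
  have hS1 : (∑ k ∈ Finset.range (N - 1), (1 - x₂) ^ (k + 1))
      ≤ (∑ k ∈ Finset.range (N - 1), (1 - x₁) ^ (k + 1)) := by
    apply Finset.sum_le_sum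
    intro k _
    exact pow_le_pow_left₀ (by linarith) (by linarith) _
  have hS2 : (∑ k ∈ Finset.range (N - 1), x₁ ^ (k + 1))
      ≤ (∑ k ∈ Finset.range (N - 1), x₂ ^ (k + 1)) := by
    apply Finset.sum_le_sum
    intro k _
    exact pow_le_pow_left₀ (by linarith) hle _
  have hNpos : (0:ℝ) < (N:ℝ) := by positivity
  have hF : (F₂ - F₁) * c / N > 0 := div_pos (mul_pos (by linarith) hc) hNpos
  have hbtr : 0 < β * τ * rp := by positivity
  have h1 : 0 ≤ α * (β * τ * rp) *
      ((∑ k ∈ Finset.range (N - 1), (1 - x₁) ^ (k + 1))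
        - (∑ k ∈ Finset.range (N - 1), (1 - x₂) ^ (k + 1))) := by
    apply mul_nonneg (mul_nonneg hα0 hbtr.le) (by linarith)
  have h2 : 0 ≤ (1 - α) * (β * τ * rp) *
      ((∑ k ∈ Finset.range (N - 1), x₂ ^ (k + 1))
        - (∑ k ∈ Finset.range (N - 1), x₁ ^ (k + 1))) := by
    apply mul_nonneg (mul_nonneg (by linarith) hbtr.le) (by linarith)
  have key : Qipgg N c τ β rp α F₁ x₁ < Qipgg N c τ β rp α F₂ x₂ := by
    unfold Qipgg
    have : F₂ * c / N - F₁ * c / N = (F₂ - F₁) * c / N := by ring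
    nlinarith [h1, h2, hF]
  rw [hQ₁, hQ₂] at key
  exact lt_irrefl 0 key
end

section
/- Suppose F < N. The interior equilibrium of the IPGG decreases as the punishment multiplier increases: if 0 < r₁ < r₂ and, for i = 1, 2, the pool multiplier F satisfies F_min(r_i) < F < F_max(r_i), and x_i* ∈ (0,1) is a zero of Q_{r_i}, then x₂* < x₁*. (Hence a stronger leader enlarges the basin of attraction of full cooperation.) -/
/-- Suppose F < N. The interior equilibrium of the IPGG decreases as the punishment
multiplier increases: if 0 < r₁ < r₂, F_min(rᵢ) < F < F_max(rᵢ) for i = 1,2, and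
xᵢ* ∈ (0,1) is a zero of Q_{rᵢ}, then x₂* < x₁*. -/
theorem ipgg_equilibrium_decreasing_in_rp (N : ℕ) (hN : 2 ≤ N) (c τ β α F : ℝ)
    (hc : 0 < c) (hτ : 0 < τ) (hβ : 0 < β) (hα0 : 0 ≤ α) (hα1 : α ≤ 1)
    (hFN : F < (N : ℝ))
    (r₁ r₂ : ℝ) (hr₁ : 0 < r₁) (hr12 : r₁ < r₂)
    (hFlo₁ : Fmin N c τ β r₁ α < F) (hFhi₁ : F < Fmax N c τ β r₁ α)
    (hFlo₂ : Fmin N c τ β r₂ α < F) (hFhi₂ : F < Fmax N c τ β r₂ α)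
    (x₁ x₂ : ℝ) (hx₁ : 0 < x₁) (hx₁' : x₁ < 1) (hx₂ : 0 < x₂) (hx₂' : x₂ < 1)
    (hQ₁ : Qipgg N c τ β r₁ α F x₁ = 0) (hQ₂ : Qipgg N c τ β r₂ α F x₂ = 0) :
    x₂ < x₁ := by
  by_contra h
  push_neg at h
  have hNpos : (0:ℝ) < N := by positivity
  -- K := c - F*c/N > 0
  have hK : 0 < c - F * c / N := by
    rw [sub_pos, div_lt_iff₀ hNpos]
    nlinarith
  set G₁ : ℝ := (1 - 2*α) - α * (∑ k ∈ Finset.range (N - 1), (1 - x₁) ^ (k + 1))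
      + (1 - α) * (∑ k ∈ Finset.range (N - 1), x₁ ^ (k + 1)) with hG₁
  set G₂ : ℝ := (1 - 2*α) - α * (∑ k ∈ Finset.range (N - 1), (1 - x₂) ^ (k + 1))
      + (1 - α) * (∑ k ∈ Finset.range (N - 1), x₂ ^ (k + 1)) with hG₂
  clear_value G₁ G₂
  have e₁ : β * τ * r₁ * G₁ = c - F * c / N := by
    unfold Qipgg at hQ₁; linear_combination hQ₁ + (β * τ * r₁) * hG₁
  have e₂ : β * τ * r₂ * G₂ = c - F * c / N := by
    unfold Qipgg at hQ₂; linear_combination hQ₂ + (β * τ * r₂) * hG₂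
  have hβτ : 0 < β * τ := mul_pos hβ hτ
  have hG₁pos : 0 < G₁ := by
    by_contra hg
    push_neg at hg
    have h0 : β * τ * r₁ * G₁ ≤ 0 := mul_nonpos_of_nonneg_of_nonpos (by positivity) hg
    linarith
  have hr₂ : 0 < r₂ := hr₁.trans hr12
  -- G₂ < G₁
  have hGlt : G₂ < G₁ := by
    have h1 : β * τ * r₂ * G₂ < β * τ * r₂ * G₁ := by
      rw [e₂, ← e₁]
      exact mul_lt_mul_of_pos_right (mul_lt_mul_of_pos_left hr12 hβτ) hG₁pos
    exact lt_of_mul_lt_mul_left h1 (by positivity)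
  -- monotonicity: x₁ ≤ x₂ implies G₁ ≤ G₂
  have hSp : (∑ k ∈ Finset.range (N - 1), x₁ ^ (k + 1))
      ≤ ∑ k ∈ Finset.range (N - 1), x₂ ^ (k + 1) :=
    Finset.sum_le_sum fun k _ => pow_le_pow_left₀ hx₁.le h _
  have hSm : (∑ k ∈ Finset.range (N - 1), (1 - x₂) ^ (k + 1))
      ≤ ∑ k ∈ Finset.range (N - 1), (1 - x₁) ^ (k + 1) :=
    Finset.sum_le_sum fun k _ => pow_le_pow_left₀ (by linarith) (by linarith) _
  have hGle : G₁ ≤ G₂ := by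
    have h1 : 0 ≤ α * ((∑ k ∈ Finset.range (N - 1), (1 - x₁) ^ (k + 1))
        - ∑ k ∈ Finset.range (N - 1), (1 - x₂) ^ (k + 1)) :=
      mul_nonneg hα0 (by linarith)
    have h2 : 0 ≤ (1 - α) * ((∑ k ∈ Finset.range (N - 1), x₂ ^ (k + 1))
        - ∑ k ∈ Finset.range (N - 1), x₁ ^ (k + 1)) :=
      mul_nonneg (by linarith) (by linarith)
    rw [hG₁, hG₂]
    nlinarith [h1, h2]
  linarith
end

section
/- For every real x with 0 < x ≤ 1, the average payoff of cooperators in the bribery game satisfies f̄_C(x) = b + F·c·((N−1)·x + 1)/N − c − τ − α·β·τ·r_p·(1 − (1−x)^{N−1})/x − ((N−1)/N)·p·γ·h + ((N−1)/N)·γ·h·(p·x + q·(1−x)). -/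
/-- Bribery-game payoff of a focal cooperator when k of the other N−1 group
members cooperate. -/
noncomputable def piCbar (N : ℕ) (b c τ β rp α F h γ p q : ℝ) (k : ℕ) : ℝ :=
  b + F * c * ((k : ℝ) + 1) / N - c - τ -
    α * β * τ * rp * ((if 1 ≤ k then (1 : ℝ) else 0) + ((N : ℝ) - 1 - k) / ((k : ℝ) + 1))
    - ((N : ℝ) - 1) / N * p * γ * h
    + γ * h / N * (p * k + q * ((N : ℝ) - 1 - k))

open Finset

private lemma bg_sum0 (n : ℕ) (x : ℝ) :
    ∑ k ∈ range (n+1), (n.choose k : ℝ) * x ^ k * (1 - x) ^ (n - k) = 1 := by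
  have h := add_pow x (1 - x) n
  rw [show x + (1 - x) = (1:ℝ) by ring, one_pow] at h
  calc ∑ k ∈ range (n+1), (n.choose k : ℝ) * x ^ k * (1 - x) ^ (n - k)
      = ∑ k ∈ range (n+1), x ^ k * (1 - x) ^ (n - k) * (n.choose k : ℝ) := by
        apply Finset.sum_congr rfl; intro k _; ring
    _ = 1 := h.symm

private lemma bg_sumShift (n : ℕ) (x : ℝ) :
    ∑ k ∈ range n, (n.choose (k+1) : ℝ) * x ^ (k+1) * (1 - x) ^ (n - (k+1)) = 1 - (1-x) ^ n := by
  have h := bg_sum0 n x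
  rw [Finset.sum_range_succ'] at h
  simp only [Nat.choose_zero_right, Nat.cast_one, pow_zero, Nat.sub_zero, one_mul, mul_one] at h
  linarith

private lemma bg_sum1 (n : ℕ) (x : ℝ) :
    ∑ k ∈ range (n+1), (n.choose k : ℝ) * x ^ k * (1 - x) ^ (n - k) * k = n * x := by
  cases n with
  | zero => simp
  | succ m =>
    rw [Finset.sum_range_succ']
    simp only [Nat.cast_zero, mul_zero, add_zero]
    have key : ∀ k ∈ range (m+1),
        ((m+1).choose (k+1) : ℝ) * x ^ (k+1) * (1-x) ^ (m+1-(k+1)) * ((k:ℕ)+1 : ℕ) =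
        ((m:ℝ)+1) * x * ((m.choose k : ℝ) * x ^ k * (1-x) ^ (m-k)) := by
      intro k _
      have hc : (((m+1).choose (k+1) : ℝ)) * ((k:ℝ)+1) = ((m:ℝ)+1) * (m.choose k : ℝ) := by
        exact_mod_cast (Nat.add_one_mul_choose_eq m k).symm
      rw [Nat.succ_sub_succ]
      push_cast
      linear_combination (x ^ (k+1) * (1-x) ^ (m-k)) * hc
    rw [Finset.sum_congr rfl key, ← Finset.mul_sum, bg_sum0 m x, mul_one]
    push_cast; ring

private lemma bg_sum3 (n : ℕ) (x : ℝ) :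
    ∑ k ∈ range (n+1), (n.choose k : ℝ) * x ^ k * (1 - x) ^ (n - k) *
      (if 1 ≤ k then (1:ℝ) else 0) = 1 - (1-x) ^ n := by
  rw [Finset.sum_range_succ']
  simp only [if_neg (by omega : ¬ 1 ≤ 0), mul_zero, add_zero]
  have : ∀ k ∈ range n, (n.choose (k+1) : ℝ) * x ^ (k+1) * (1-x) ^ (n-(k+1)) *
      (if 1 ≤ k + 1 then (1:ℝ) else 0) = (n.choose (k+1) : ℝ) * x ^ (k+1) * (1-x) ^ (n-(k+1)) := by
    intro k _; rw [if_pos (by omega)]; ring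
  rw [Finset.sum_congr rfl this, bg_sumShift]

private lemma bg_sum2 (n : ℕ) (x : ℝ) (hx : x ≠ 0) :
    ∑ k ∈ range (n+1), (n.choose k : ℝ) * x ^ k * (1 - x) ^ (n - k) *
      (((n:ℝ) - k) / ((k:ℝ) + 1)) = (1-x) * (1 - (1-x) ^ n) / x := by
  rw [eq_div_iff hx]
  calc (∑ k ∈ range (n+1), (n.choose k : ℝ) * x ^ k * (1 - x) ^ (n - k) *
        (((n:ℝ) - k) / ((k:ℝ) + 1))) * x
      = ∑ k ∈ range (n+1), (n.choose (k+1) : ℝ) * x ^ (k+1) * (1-x) ^ (n-k) := by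
        rw [Finset.sum_mul]
        apply Finset.sum_congr rfl
        intro k hk
        have hkn : k ≤ n := by simpa [Nat.lt_succ_iff] using hk
        have hc : (n.choose (k+1) : ℝ) * ((k:ℝ)+1) = (n.choose k : ℝ) * ((n:ℝ) - k) := by
          have h1 : ((n.choose (k+1) * (k+1) : ℕ) : ℝ) = ((n.choose k * (n-k) : ℕ) : ℝ) := by
            exact_mod_cast congrArg (Nat.cast (R := ℝ)) (Nat.choose_succ_right_eq n k)
          push_cast [Nat.cast_sub hkn] at h1
          linarith
        have hk1 : ((k:ℝ) + 1) ≠ 0 := by positivity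
        have hstep : (n.choose k : ℝ) * x ^ k * (1-x) ^ (n-k) * (((n:ℝ)-k)/((k:ℝ)+1)) * x
            = ((n.choose k : ℝ) * ((n:ℝ)-k)) * (x ^ (k+1) * (1-x) ^ (n-k)) / ((k:ℝ)+1) := by
          ring
        rw [hstep, ← hc]
        field_simp
    _ = (1-x) * (1 - (1-x)^n) := by
        rw [Finset.sum_range_succ, Nat.choose_succ_self]
        simp only [Nat.cast_zero, zero_mul, add_zero]
        have : ∀ k ∈ range n, (n.choose (k+1) : ℝ) * x ^ (k+1) * (1-x) ^ (n-k) =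
            (1-x) * ((n.choose (k+1) : ℝ) * x ^ (k+1) * (1-x) ^ (n-(k+1))) := by
          intro k hk
          have hkn : k < n := by simpa using hk
          have hnk : n - k = (n - (k+1)) + 1 := by omega
          rw [hnk, pow_succ]; ring
        rw [Finset.sum_congr rfl this, ← Finset.mul_sum, bg_sumShift]

/-- Average payoff of cooperators in the bribery game at cooperator frequency x ∈ (0,1]:
f̄_C(x) = b + F·c·((N−1)·x+1)/N − c − τ − α·β·τ·r_p·(1−(1−x)^{N−1})/x
  − ((N−1)/N)·p·γ·h + ((N−1)/N)·γ·h·(p·x + q·(1−x)). -/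
theorem bg_avg_payoff_cooperators (N : ℕ) (hN : 2 ≤ N) (b c τ β rp α F h γ p q : ℝ)
    (hc : 0 < c) (hτ : 0 < τ) (hβ : 0 < β) (hrp : 0 < rp) (hα0 : 0 ≤ α) (hα1 : α ≤ 1)
    (hh : 0 < h) (hγ0 : 0 < γ) (hγ1 : γ ≤ 1) (hp0 : 0 ≤ p) (hp1 : p ≤ 1)
    (hq0 : 0 ≤ q) (hq1 : q ≤ 1)
    (x : ℝ) (hx : 0 < x) (hx1 : x ≤ 1) :
    ∑ k ∈ Finset.range N,
      ((N - 1).choose k : ℝ) * x ^ k * (1 - x) ^ (N - 1 - k) * piCbar N b c τ β rp α F h γ p q k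
      = b + F * c * (((N : ℝ) - 1) * x + 1) / N - c - τ -
        α * β * τ * rp * (1 - (1 - x) ^ (N - 1)) / x -
        ((N : ℝ) - 1) / N * p * γ * h +
        ((N : ℝ) - 1) / N * γ * h * (p * x + q * (1 - x)) := by
  obtain ⟨n, rfl⟩ : ∃ n, N = n + 1 := ⟨N - 1, by omega⟩
  simp only [Nat.add_sub_cancel]
  set A : ℝ := b + F * c / ((n:ℝ)+1) - c - τ - ((n:ℝ)) / ((n:ℝ)+1) * p * γ * h
      + γ * h / ((n:ℝ)+1) * (q * n) with hA
  set B : ℝ := F * c / ((n:ℝ)+1) + γ * h / ((n:ℝ)+1) * (p - q) with hB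
  set C : ℝ := -(α * β * τ * rp) with hC
  have term : ∀ k ∈ range (n+1),
      ((n.choose k : ℝ) * x ^ k * (1 - x) ^ (n - k)) * piCbar (n+1) b c τ β rp α F h γ p q k =
      A * ((n.choose k : ℝ) * x ^ k * (1 - x) ^ (n - k))
      + B * ((n.choose k : ℝ) * x ^ k * (1 - x) ^ (n - k) * k)
      + C * ((n.choose k : ℝ) * x ^ k * (1 - x) ^ (n - k) * (if 1 ≤ k then (1:ℝ) else 0))
      + C * ((n.choose k : ℝ) * x ^ k * (1 - x) ^ (n - k) * (((n:ℝ) - k) / ((k:ℝ) + 1))) := by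
    intro k _
    rw [piCbar, hA, hB, hC]
    push_cast
    ring
  rw [Finset.sum_congr rfl term]
  simp only [Finset.sum_add_distrib, ← Finset.mul_sum]
  rw [bg_sum0, bg_sum1, bg_sum3, bg_sum2 n x hx.ne']
  rw [hA, hB, hC]
  have hN1 : ((n:ℝ) + 1) ≠ 0 := by positivity
  push_cast
  field_simp
  ring
end
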